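/- Let h = k ⊕ k with nonzero brackets [e₁,e₂]=e₂, [e₃,e₄]=e₄, acting on itself by the adjoint action. Then H²(h,h) = {0}. -/

import Mathlib

set_option maxHeartbeats 1000000 in
/-- For `h = k ⊕ k` (basis `e₁,…,e₄`, nonzero brackets
`⁅e₁,e₂⁆ = e₂`, `⁅e₃,e₄⁆ = e₄`) acting on itself by the adjoint action,
`H²(h,h) = {0}`: every alternating bilinear 2-cocycle `c : h × h → h`
(Chevalley–Eilenberg cocycle condition for the adjoint module) is the
coboundary `c(x,y) = ⁅x, l y⁆ - ⁅y, l x⁆ - l ⁅x,y⁆` of a linear map `l`. -/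
theorem stmt_15 (H : Type) [LieRing H] [LieAlgebra ℝ H]
    (b : Module.Basis (Fin 4) ℝ H)
    (h12 : ⁅b 0, b 1⁆ = b 1) (h34 : ⁅b 2, b 3⁆ = b 3)
    (h13 : ⁅b 0, b 2⁆ = 0) (h14 : ⁅b 0, b 3⁆ = 0)
    (h23 : ⁅b 1, b 2⁆ = 0) (h24 : ⁅b 1, b 3⁆ = 0) :
    ∀ c : H →ₗ[ℝ] H →ₗ[ℝ] H, (∀ x : H, c x x = 0) →
      (∀ x y z : H,
        ⁅x, c y z⁆ - ⁅y, c x z⁆ + ⁅z, c x y⁆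
          - c ⁅x, y⁆ z + c ⁅x, z⁆ y - c ⁅y, z⁆ x = 0) →
      ∃ l : H →ₗ[ℝ] H, ∀ x y : H,
        c x y = ⁅x, l y⁆ - ⁅y, l x⁆ - l ⁅x, y⁆ := by
  intro c hc hcoc
  have hanti : ∀ x y : H, c y x = - c x y := by
    intro x y
    have h := hc (x + y)
    simp only [map_add, LinearMap.add_apply, hc x, hc y, zero_add, add_zero] at h
    exact eq_neg_of_add_eq_zero_left h
  -- bracket table
  have g00 : ⁅b 0, b 0⁆ = (0 : H) := lie_self _
  have g11 : ⁅b 1, b 1⁆ = (0 : H) := lie_self _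
  have g22 : ⁅b 2, b 2⁆ = (0 : H) := lie_self _
  have g33 : ⁅b 3, b 3⁆ = (0 : H) := lie_self _
  have g10 : ⁅b 1, b 0⁆ = -(b 1) := by rw [← lie_skew, h12]
  have g32 : ⁅b 3, b 2⁆ = -(b 3) := by rw [← lie_skew, h34]
  have g20 : ⁅b 2, b 0⁆ = (0 : H) := by rw [← lie_skew, h13, neg_zero]
  have g30 : ⁅b 3, b 0⁆ = (0 : H) := by rw [← lie_skew, h14, neg_zero]
  have g21 : ⁅b 2, b 1⁆ = (0 : H) := by rw [← lie_skew, h23, neg_zero]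
  have g31 : ⁅b 3, b 1⁆ = (0 : H) := by rw [← lie_skew, h24, neg_zero]
  -- coordinates of c
  obtain ⟨r, hrexp⟩ : ∃ r : Fin 4 → Fin 4 → Fin 4 → ℝ, ∀ i j : Fin 4,
      c (b i) (b j) = r i j 0 • b 0 + r i j 1 • b 1 + r i j 2 • b 2 + r i j 3 • b 3 := by
    refine ⟨fun i j k => b.repr (c (b i) (b j)) k, fun i j => ?_⟩
    have h := b.sum_repr (c (b i) (b j))
    rw [Fin.sum_univ_four] at h
    exact h.symm
  -- scalar cocycle equations
  have E012 := hcoc (b 0) (b 1) (b 2)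
  rw [h12, h13, h23] at E012
  rw [hrexp 1 2, hrexp 0 2, hrexp 0 1] at E012
  simp only [map_zero, LinearMap.zero_apply, lie_add, lie_smul,
    g00, g11, g22, g33, g10, g20, g21, g30, g31, g32, h12, h34, h13, h14, h23, h24,
    smul_zero, smul_neg, add_zero, zero_add, sub_zero, zero_sub, neg_zero] at E012
  have E012_0 := congrArg (fun w => b.repr w 0) E012
  have E012_1 := congrArg (fun w => b.repr w 1) E012
  have E012_2 := congrArg (fun w => b.repr w 2) E012
  have E012_3 := congrArg (fun w => b.repr w 3) E012
  simp at E012_0 E012_1 E012_2 E012_3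
  have E013 := hcoc (b 0) (b 1) (b 3)
  rw [h12, h14, h24] at E013
  rw [hrexp 1 3, hrexp 0 3, hrexp 0 1] at E013
  simp only [map_zero, LinearMap.zero_apply, lie_add, lie_smul,
    g00, g11, g22, g33, g10, g20, g21, g30, g31, g32, h12, h34, h13, h14, h23, h24,
    smul_zero, smul_neg, add_zero, zero_add, sub_zero, zero_sub, neg_zero] at E013
  have E013_0 := congrArg (fun w => b.repr w 0) E013
  have E013_1 := congrArg (fun w => b.repr w 1) E013
  have E013_2 := congrArg (fun w => b.repr w 2) E013
  have E013_3 := congrArg (fun w => b.repr w 3) E013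
  simp at E013_0 E013_1 E013_2 E013_3
  have E023 := hcoc (b 0) (b 2) (b 3)
  rw [h13, h14, h34, hanti (b 0) (b 3)] at E023
  rw [hrexp 2 3, hrexp 0 3, hrexp 0 2] at E023
  simp only [map_zero, LinearMap.zero_apply, map_neg, lie_add, lie_smul, lie_neg,
    g00, g11, g22, g33, g10, g20, g21, g30, g31, g32, h12, h34, h13, h14, h23, h24,
    smul_zero, smul_neg, add_zero, zero_add, sub_zero, zero_sub, neg_zero] at E023
  have E023_0 := congrArg (fun w => b.repr w 0) E023
  have E023_1 := congrArg (fun w => b.repr w 1) E023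
  have E023_2 := congrArg (fun w => b.repr w 2) E023
  have E023_3 := congrArg (fun w => b.repr w 3) E023
  simp at E023_0 E023_1 E023_2 E023_3
  have E123 := hcoc (b 1) (b 2) (b 3)
  rw [h23, h24, h34, hanti (b 1) (b 3)] at E123
  rw [hrexp 2 3, hrexp 1 3, hrexp 1 2] at E123
  simp only [map_zero, LinearMap.zero_apply, map_neg, lie_add, lie_smul, lie_neg,
    g00, g11, g22, g33, g10, g20, g21, g30, g31, g32, h12, h34, h13, h14, h23, h24,
    smul_zero, smul_neg, add_zero, zero_add, sub_zero, zero_sub, neg_zero] at E123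
  have E123_0 := congrArg (fun w => b.repr w 0) E123
  have E123_1 := congrArg (fun w => b.repr w 1) E123
  have E123_2 := congrArg (fun w => b.repr w 2) E123
  have E123_3 := congrArg (fun w => b.repr w 3) E123
  simp at E123_0 E123_1 E123_2 E123_3
  -- the homotopy l
  set l : H →ₗ[ℝ] H := b.constr ℝ
    ![r 0 1 1 • b 0 + r 0 3 3 • b 2 - r 0 2 3 • b 3,
      -(r 0 1 0) • b 0 + r 1 3 3 • b 2 - r 1 2 3 • b 3,
      -(r 1 2 1) • b 0 + r 0 2 1 • b 1 + r 2 3 3 • b 2,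
      -(r 2 3 0) • b 0 - r 2 3 1 • b 1 - r 2 3 2 • b 2] with hldef
  have hl0 : l (b 0) = r 0 1 1 • b 0 + r 0 3 3 • b 2 - r 0 2 3 • b 3 := by
    rw [hldef, Module.Basis.constr_basis]; rfl
  have hl1 : l (b 1) = -(r 0 1 0) • b 0 + r 1 3 3 • b 2 - r 1 2 3 • b 3 := by
    rw [hldef, Module.Basis.constr_basis]; rfl
  have hl2 : l (b 2) = -(r 1 2 1) • b 0 + r 0 2 1 • b 1 + r 2 3 3 • b 2 := by
    rw [hldef, Module.Basis.constr_basis]; rfl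
  have hl3 : l (b 3) = -(r 2 3 0) • b 0 - r 2 3 1 • b 1 - r 2 3 2 • b 2 := by
    rw [hldef, Module.Basis.constr_basis]; rfl
  have key01 : c (b 0) (b 1) = ⁅b 0, l (b 1)⁆ - ⁅b 1, l (b 0)⁆ - l ⁅b 0, b 1⁆ := by
    rw [hrexp 0 1, h12, hl0, hl1]
    simp only [lie_add, lie_sub, lie_smul, lie_neg, smul_neg, neg_neg,
      g00, g11, g22, g33, g10, g20, g21, g30, g31, g32, h12, h34, h13, h14, h23, h24,
      smul_zero, add_zero, zero_add, sub_zero, zero_sub, neg_zero]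
    match_scalars <;> linarith
  have key02 : c (b 0) (b 2) = ⁅b 0, l (b 2)⁆ - ⁅b 2, l (b 0)⁆ - l ⁅b 0, b 2⁆ := by
    rw [hrexp 0 2, h13, hl0, hl2]
    simp only [lie_add, lie_sub, lie_smul, lie_neg, smul_neg, neg_neg, map_zero,
      g00, g11, g22, g33, g10, g20, g21, g30, g31, g32, h12, h34, h13, h14, h23, h24,
      smul_zero, add_zero, zero_add, sub_zero, zero_sub, neg_zero]
    match_scalars <;> linarith
  have key03 : c (b 0) (b 3) = ⁅b 0, l (b 3)⁆ - ⁅b 3, l (b 0)⁆ - l ⁅b 0, b 3⁆ := by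
    rw [hrexp 0 3, h14, hl0, hl3]
    simp only [lie_add, lie_sub, lie_smul, lie_neg, smul_neg, neg_neg, map_zero,
      g00, g11, g22, g33, g10, g20, g21, g30, g31, g32, h12, h34, h13, h14, h23, h24,
      smul_zero, add_zero, zero_add, sub_zero, zero_sub, neg_zero]
    match_scalars <;> linarith
  have key12 : c (b 1) (b 2) = ⁅b 1, l (b 2)⁆ - ⁅b 2, l (b 1)⁆ - l ⁅b 1, b 2⁆ := by
    rw [hrexp 1 2, h23, hl1, hl2]
    simp only [lie_add, lie_sub, lie_smul, lie_neg, smul_neg, neg_neg, map_zero,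
      g00, g11, g22, g33, g10, g20, g21, g30, g31, g32, h12, h34, h13, h14, h23, h24,
      smul_zero, add_zero, zero_add, sub_zero, zero_sub, neg_zero]
    match_scalars <;> linarith
  have key13 : c (b 1) (b 3) = ⁅b 1, l (b 3)⁆ - ⁅b 3, l (b 1)⁆ - l ⁅b 1, b 3⁆ := by
    rw [hrexp 1 3, h24, hl1, hl3]
    simp only [lie_add, lie_sub, lie_smul, lie_neg, smul_neg, neg_neg, map_zero,
      g00, g11, g22, g33, g10, g20, g21, g30, g31, g32, h12, h34, h13, h14, h23, h24,
      smul_zero, add_zero, zero_add, sub_zero, zero_sub, neg_zero]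
    match_scalars <;> linarith
  have key23 : c (b 2) (b 3) = ⁅b 2, l (b 3)⁆ - ⁅b 3, l (b 2)⁆ - l ⁅b 2, b 3⁆ := by
    rw [hrexp 2 3, h34, hl2, hl3]
    simp only [lie_add, lie_sub, lie_smul, lie_neg, smul_neg, neg_neg,
      g00, g11, g22, g33, g10, g20, g21, g30, g31, g32, h12, h34, h13, h14, h23, h24,
      smul_zero, add_zero, zero_add, sub_zero, zero_sub, neg_zero]
    match_scalars <;> linarith
  have keyall : ∀ i j : Fin 4,
      c (b i) (b j) = ⁅b i, l (b j)⁆ - ⁅b j, l (b i)⁆ - l ⁅b i, b j⁆ := by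
    have diag : ∀ x : H, c x x = ⁅x, l x⁆ - ⁅x, l x⁆ - l ⁅x, x⁆ := by
      intro x; simp [hc x]
    have swap : ∀ x y : H, c x y = ⁅x, l y⁆ - ⁅y, l x⁆ - l ⁅x, y⁆ →
        c y x = ⁅y, l x⁆ - ⁅x, l y⁆ - l ⁅y, x⁆ := by
      intro x y hxy
      rw [hanti x y, hxy, ← lie_skew x y, map_neg]
      abel
    intro i j
    fin_cases i <;> fin_cases j
    · exact diag _
    · exact key01
    · exact key02
    · exact key03
    · exact swap _ _ key01
    · exact diag _
    · exact key12
    · exact key13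
    · exact swap _ _ key02
    · exact swap _ _ key12
    · exact diag _
    · exact key23
    · exact swap _ _ key03
    · exact swap _ _ key13
    · exact swap _ _ key23
    · exact diag _
  -- extend to all x, y via bilinearity
  refine ⟨l, ?_⟩
  have hD : ∀ (D : H →ₗ[ℝ] H →ₗ[ℝ] H), (∀ i j : Fin 4, c (b i) (b j) = D (b i) (b j)) →
      ∀ x y, c x y = D x y := by
    intro D hij x y
    have : c = D := b.ext fun i => b.ext fun j => hij i j
    rw [this]
  intro x y
  exact hD (LinearMap.mk₂ ℝ (fun x y => ⁅x, l y⁆ - ⁅y, l x⁆ - l ⁅x, y⁆)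
      (by intro m n z; simp only [add_lie, map_add, lie_add]; abel)
      (by intro t m n; simp only [smul_lie, lie_smul, map_smul, smul_sub])
      (by intro m n z; simp only [add_lie, map_add, lie_add]; abel)
      (by intro t m n; simp only [smul_lie, lie_smul, map_smul, smul_sub]))
    (fun i j => by rw [LinearMap.mk₂_apply]; exact keyall i j) x y
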